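/- Both trace pairings are unimodular: the R-bilinear form B_C(x, y) = ε_C(x·y) on A induces an R-module isomorphism A → Hom_R(A, R), x ↦ B_C(x, −), and likewise the R-bilinear form B_W(x, y) = ε_W(x·y) induces an R-module isomorphism A → Hom_R(A, R); hence the comultiplications dual to the multiplication via ε_C and ε_W are well defined. -/

import Mathlib

open TensorProduct Polynomial

noncomputable section

variable {R : Type*} [CommRing R]

/-- The algebra `A = R[X]/(X² - h·X - a)`. -/
abbrev FrobA (a h : R) : Type _ := AdjoinRoot (X ^ 2 - C h * X - C a)

/-- The image of the variable `X` in `A`. -/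
abbrev FrobX (a h : R) : FrobA a h := AdjoinRoot.root _

lemma frob_monic (a h : R) : (X ^ 2 - C h * X - C a : R[X]).Monic := by
  monicity!

lemma frob_X_sq (a h : R) : FrobX a h * FrobX a h = h • FrobX a h + a • (1 : FrobA a h) := by
  have h0 := AdjoinRoot.mk_self (f := (X ^ 2 - C h * X - C a : R[X]))
  have : (AdjoinRoot.mk (X ^ 2 - C h * X - C a : R[X])) (X ^ 2 - C h * X - C a) =
      FrobX a h * FrobX a h - h • FrobX a h - a • 1 := by
    simp [map_sub, map_pow, sq, Algebra.smul_def]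
  rw [this] at h0
  linear_combination (norm := module) h0

lemma frob_pairing_unimodular (a h u v : R) (huv : u * v = 1)
    (ε : FrobA a h →ₗ[R] R) (hε1 : ε 1 = 0) (hεX : ε (FrobX a h) = u) :
    ∃ e : FrobA a h ≃ₗ[R] Module.Dual R (FrobA a h),
      ∀ x y : FrobA a h, e x y = ε (x * y) := by
  set Xr := FrobX a h with hXr
  have hX2 : Xr * Xr = h • Xr + a • (1 : FrobA a h) := frob_X_sq a h
  set φ : FrobA a h →ₗ[R] Module.Dual R (FrobA a h) :=
    (LinearMap.mul R (FrobA a h)).compr₂ ε with hφ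
  have hφ_apply : ∀ x y, φ x y = ε (x * y) := fun x y => rfl
  set ψ : Module.Dual R (FrobA a h) →ₗ[R] FrobA a h :=
    { toFun := fun f => (v * f Xr - h * v * f 1) • 1 + (v * f 1) • Xr
      map_add' := by
        intro f g
        simp only [LinearMap.add_apply]
        module
      map_smul' := by
        intro c f
        simp only [LinearMap.smul_apply, smul_eq_mul, RingHom.id_apply]
        module } with hψ
  have hψ_apply : ∀ f, ψ f = (v * f Xr - h * v * f 1) • 1 + (v * f 1) • Xr := fun f => rfl
  by_cases htriv : (1 : R) = 0
  · have : Subsingleton R := subsingleton_of_zero_eq_one htriv.symm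
    have : Subsingleton (FrobA a h) := Module.subsingleton R _
    exact ⟨LinearEquiv.ofLinear φ ψ (Subsingleton.elim _ _) (Subsingleton.elim _ _),
      fun x y => rfl⟩
  have : Nontrivial R := ⟨1, 0, htriv⟩
  set b := (AdjoinRoot.powerBasis' (frob_monic a h)) with hbdef
  have hdim : b.dim = 2 := by
    simp only [hbdef, AdjoinRoot.powerBasis'_dim]
    compute_degree!
  have hgen : b.gen = Xr := rfl
  have basis_ext : ∀ {M : Type _} [AddCommGroup M] [Module R M]
      (f g : FrobA a h →ₗ[R] M), f 1 = g 1 → f Xr = g Xr → f = g := by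
    intro M _ _ f g h1 h2
    apply b.basis.ext
    intro j
    rcases j with ⟨jv, hj⟩
    rw [hdim] at hj
    interval_cases jv <;> rw [b.basis_eq_pow, hgen]
    · simpa using h1
    · simpa using h2
  have hψφ : ψ.comp φ = LinearMap.id := by
    apply basis_ext
    · simp only [LinearMap.comp_apply, LinearMap.id_apply, hψ_apply, hφ_apply, one_mul,
        hε1, hεX]
      match_scalars <;> first | linear_combination huv | linear_combination -huv | ring
    · simp only [LinearMap.comp_apply, LinearMap.id_apply, hψ_apply, hφ_apply, mul_one,
        hX2, map_add, map_smul, hε1, hεX, smul_eq_mul]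
      match_scalars <;> first | linear_combination huv | linear_combination -huv | ring
  have hφψ : φ.comp ψ = LinearMap.id := by
    apply LinearMap.ext
    intro f
    apply basis_ext
    · simp only [LinearMap.comp_apply, LinearMap.id_apply, hψ_apply, map_add, map_smul,
        LinearMap.add_apply, LinearMap.smul_apply, hφ_apply, one_mul, mul_one, hX2,
        hε1, hεX, smul_eq_mul]
      first | linear_combination f 1 * huv | linear_combination (-(f 1)) * huv
    · simp only [LinearMap.comp_apply, LinearMap.id_apply, hψ_apply, map_add, map_smul,
        LinearMap.add_apply, LinearMap.smul_apply, hφ_apply, one_mul, mul_one, hX2,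
        hε1, hεX, smul_eq_mul]
      first | linear_combination f Xr * huv | linear_combination (-(f Xr)) * huv
  exact ⟨LinearEquiv.ofLinear φ ψ hφψ hψφ, fun x y => rfl⟩

/-- both trace pairings `B_C(x,y) = ε_C(x·y)` and `B_W(x,y) = ε_W(x·y)` are
unimodular: each induces an `R`-module isomorphism `A ≅ Hom_R(A, R)`. -/
theorem trace_pairings_unimodular (a h i : R) (hi : i ^ 2 = -1)
    (εC εW : FrobA a h →ₗ[R] R)
    (hεC1 : εC 1 = 0) (hεCX : εC (FrobX a h) = 1)
    (hεW1 : εW 1 = 0) (hεWX : εW (FrobX a h) = -i) :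
    (∃ e : FrobA a h ≃ₗ[R] Module.Dual R (FrobA a h),
      ∀ x y : FrobA a h, e x y = εC (x * y)) ∧
    (∃ e : FrobA a h ≃ₗ[R] Module.Dual R (FrobA a h),
      ∀ x y : FrobA a h, e x y = εW (x * y)) := by
  constructor
  · exact frob_pairing_unimodular a h 1 1 (one_mul 1) εC hεC1 hεCX
  · refine frob_pairing_unimodular a h (-i) i ?_ εW hεW1 hεWX
    linear_combination -hi

end
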